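/- Let n ≥ 2, let σ, τ be permutations of Fin n, and let O be an orbit of the permutation σ⁻¹ ∘ τ on Fin n with |O| = ℓ ≥ 2. Then the subgraph of K_{n,n} whose edge set is {s(Sum.inl m, Sum.inr (σ m)) : m ∈ O} ∪ {s(Sum.inl m, Sum.inr (τ m)) : m ∈ O} is a cycle of length 2ℓ, in which edges of M_σ and edges of M_τ alternate. -/

import Mathlib

open SimpleGraph

/-- The perfect matching of `K_{n,n}` associated with a permutation `σ` of `Fin n`:
its edge set is `{s(Sum.inl m, Sum.inr (σ m)) : m ∈ Fin n}`. -/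
def matchingEdges (n : ℕ) (σ : Equiv.Perm (Fin n)) : Set (Sym2 (Fin n ⊕ Fin n)) :=
  {e | ∃ m : Fin n, e = s(Sum.inl m, Sum.inr (σ m))}

lemma pow_succ_apply {n : ℕ} (f : Equiv.Perm (Fin n)) (k : ℕ) (a : Fin n) :
    (f ^ (k + 1)) a = (f ^ k) (f a) := by rw [pow_succ]; rfl

lemma pow_succ_apply' {n : ℕ} (f : Equiv.Perm (Fin n)) (k : ℕ) (a : Fin n) :
    (f ^ (k + 1)) a = f ((f ^ k) a) := by rw [pow_succ']; rfl

/-- The alternating walk of length `2m` from `inl a` to `inl (f^m a)`. -/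
def cyc (n : ℕ) (f τ : Equiv.Perm (Fin n)) : (m : ℕ) → (a : Fin n) →
    (completeBipartiteGraph (Fin n) (Fin n)).Walk (Sum.inl a) (Sum.inl ((f ^ m) a))
  | 0, a => Walk.nil.copy rfl (by simp)
  | m + 1, a =>
      Walk.cons (v := Sum.inr (τ a)) (by simp)
        (Walk.cons (v := Sum.inl (f a)) (by simp)
          ((cyc n f τ m (f a)).copy rfl (congrArg Sum.inl (pow_succ_apply f m a).symm)))

lemma cyc_length (n : ℕ) (f τ : Equiv.Perm (Fin n)) (m : ℕ) (a : Fin n) :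
    (cyc n f τ m a).length = 2 * m := by
  induction m generalizing a with
  | zero => simp [cyc]
  | succ m ih => simp [cyc, ih]; omega

def tl (n : ℕ) (f τ : Equiv.Perm (Fin n)) (a : Fin n) (j : ℕ) : Fin n ⊕ Fin n :=
  if j % 2 = 0 then Sum.inr (τ ((f ^ (j / 2)) a)) else Sum.inl ((f ^ (j / 2 + 1)) a)

def edg (n : ℕ) (f τ : Equiv.Perm (Fin n)) (a : Fin n) (j : ℕ) : Sym2 (Fin n ⊕ Fin n) :=
  if j % 2 = 0 then s(Sum.inl ((f ^ (j / 2)) a), Sum.inr (τ ((f ^ (j / 2)) a)))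
  else s(Sum.inr (τ ((f ^ (j / 2)) a)), Sum.inl ((f ^ (j / 2 + 1)) a))

lemma tl_shift (n : ℕ) (f τ : Equiv.Perm (Fin n)) (a : Fin n) (j : ℕ) :
    tl n f τ a (j + 2) = tl n f τ (f a) j := by
  unfold tl
  have h2 : (j + 2) % 2 = j % 2 := by omega
  have h3 : (j + 2) / 2 = j / 2 + 1 := by omega
  rw [h2, h3]
  by_cases hj : j % 2 = 0 <;> simp [hj, pow_succ_apply]

lemma edg_shift (n : ℕ) (f τ : Equiv.Perm (Fin n)) (a : Fin n) (j : ℕ) :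
    edg n f τ a (j + 2) = edg n f τ (f a) j := by
  unfold edg
  have h2 : (j + 2) % 2 = j % 2 := by omega
  have h3 : (j + 2) / 2 = j / 2 + 1 := by omega
  rw [h2, h3]
  by_cases hj : j % 2 = 0 <;> simp [hj, pow_succ_apply]

lemma range_two_shift (m : ℕ) :
    List.range (2 * (m + 1)) = 0 :: 1 :: (List.range (2 * m)).map (· + 2) := by
  have : 2 * (m + 1) = (2 * m + 1) + 1 := by ring
  rw [this, List.range_succ_eq_map, List.range_succ_eq_map, List.map_cons, List.map_map]
  rfl

lemma cyc_support (n : ℕ) (f τ : Equiv.Perm (Fin n)) (m : ℕ) (a : Fin n) :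
    (cyc n f τ m a).support = Sum.inl a :: (List.range (2 * m)).map (tl n f τ a) := by
  induction m generalizing a with
  | zero => simp [cyc]
  | succ m ih =>
    rw [range_two_shift, List.map_cons, List.map_cons, List.map_map]
    have hcomp : tl n f τ a ∘ (· + 2) = tl n f τ (f a) := by
      funext j; exact tl_shift n f τ a j
    rw [hcomp]
    simp only [cyc, Walk.support_cons, Walk.support_copy, ih]
    simp [tl, pow_one]

lemma cyc_edges (n : ℕ) (f τ : Equiv.Perm (Fin n)) (m : ℕ) (a : Fin n) :
    (cyc n f τ m a).edges = (List.range (2 * m)).map (edg n f τ a) := by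
  induction m generalizing a with
  | zero => simp [cyc]
  | succ m ih =>
    rw [range_two_shift, List.map_cons, List.map_cons, List.map_map]
    have hcomp : edg n f τ a ∘ (· + 2) = edg n f τ (f a) := by
      funext j; exact edg_shift n f τ a j
    rw [hcomp]
    simp only [cyc, Walk.edges_cons, Walk.edges_copy, ih]
    simp [edg, pow_one]

/-- If `O` is an orbit of `σ⁻¹ ∘ τ` on `Fin n` of size `ℓ ≥ 2`, then the subgraph of
`K_{n,n}` with edge set `{s(inl m, inr (σ m)) : m ∈ O} ∪ {s(inl m, inr (τ m)) : m ∈ O}`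
is a cycle of length `2ℓ` in which edges of `M_σ` and edges of `M_τ` alternate. -/
theorem stmt6 (n : ℕ) (hn : 2 ≤ n) (σ τ : Equiv.Perm (Fin n))
    (O : Set (Fin n)) (u : Fin n)
    (hO : O = {v | ∃ k : ℕ, ((σ⁻¹ * τ) ^ k) u = v})
    (ℓ : ℕ) (hℓ : 2 ≤ ℓ) (hcard : O.ncard = ℓ) :
    ∃ (v : Fin n ⊕ Fin n)
        (w : (completeBipartiteGraph (Fin n) (Fin n)).Walk v v),
      w.IsCycle ∧ w.length = 2 * ℓ ∧
      {e | e ∈ w.edges} =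
        ({e | ∃ m ∈ O, e = s(Sum.inl m, Sum.inr (σ m))} ∪
          {e | ∃ m ∈ O, e = s(Sum.inl m, Sum.inr (τ m))}) ∧
      ∀ (i : ℕ) (h1 : i < w.edges.length) (h2 : i + 1 < w.edges.length),
        (w.edges.get ⟨i, h1⟩ ∈ matchingEdges n σ ∧
            w.edges.get ⟨i + 1, h2⟩ ∈ matchingEdges n τ) ∨
        (w.edges.get ⟨i, h1⟩ ∈ matchingEdges n τ ∧
            w.edges.get ⟨i + 1, h2⟩ ∈ matchingEdges n σ) := by
  set f : Equiv.Perm (Fin n) := σ⁻¹ * τ with hf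
  have key : ∀ a : Fin n, σ (f a) = τ a := by
    intro a; simp [hf, Equiv.Perm.mul_apply]
  -- orbit facts
  have hmem : u ∈ Function.periodicPts (⇑f) := by
    refine ⟨orderOf f, orderOf_pos f, ?_⟩
    show (⇑f)^[orderOf f] u = u
    rw [← Equiv.Perm.coe_pow, pow_orderOf_eq_one]; rfl
  set p := Function.minimalPeriod (⇑f) u with hpdef
  have hp : 0 < p := Function.minimalPeriod_pos_of_mem_periodicPts hmem
  have hperp : (f ^ p) u = u := Function.iterate_minimalPeriod
  have hmodper : ∀ k : ℕ, (f ^ (k % p)) u = (f ^ k) u := fun k =>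
    Function.iterate_mod_minimalPeriod_eq
  have hltinj : ∀ s t : ℕ, s < p → t < p → (f ^ s) u = (f ^ t) u → s = t := by
    intro s t hs ht h
    exact Function.iterate_injOn_Iio_minimalPeriod hs ht h
  -- p = ℓ
  have hOfin : O = ((Finset.range p).image fun k => (f ^ k) u : Finset (Fin n)) := by
    ext v
    simp only [hO, Set.mem_setOf_eq, Finset.coe_image, Set.mem_image, Finset.mem_coe,
      Finset.mem_range]
    constructor
    · rintro ⟨k, rfl⟩
      exact ⟨k % p, Nat.mod_lt _ hp, hmodper k⟩
    · rintro ⟨k, -, rfl⟩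
      exact ⟨k, rfl⟩
  have hpl : p = ℓ := by
    rw [← hcard, hOfin, Set.ncard_coe_finset, Finset.card_image_of_injOn, Finset.card_range]
    intro s hs t ht h
    exact hltinj s t (Finset.mem_range.mp hs) (Finset.mem_range.mp ht) h
  rw [hpl] at hp hperp hmodper hltinj
  clear hpdef hmem
  -- injectivity on [1, ℓ]
  have hUinj : ∀ s t : ℕ, 1 ≤ s → s ≤ ℓ → 1 ≤ t → t ≤ ℓ →
      (f ^ s) u = (f ^ t) u → s = t := by
    intro s t hs1 hs2 ht1 ht2 h
    have h' : s % ℓ = t % ℓ := by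
      apply hltinj _ _ (Nat.mod_lt _ hp) (Nat.mod_lt _ hp)
      rw [hmodper, hmodper]; exact h
    rcases Nat.lt_or_ge s ℓ with hs' | hs'
    · rcases Nat.lt_or_ge t ℓ with ht' | ht'
      · rwa [Nat.mod_eq_of_lt hs', Nat.mod_eq_of_lt ht'] at h'
      · have hteq : t = ℓ := le_antisymm ht2 ht'
        rw [Nat.mod_eq_of_lt hs', hteq, Nat.mod_self] at h'; omega
    · have hseq : s = ℓ := le_antisymm hs2 hs'
      rcases Nat.lt_or_ge t ℓ with ht' | ht'
      · rw [hseq, Nat.mod_self, Nat.mod_eq_of_lt ht'] at h'; omega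
      · have hteq : t = ℓ := le_antisymm ht2 ht'
        omega
  -- description of edges
  have hedg_even : ∀ j : ℕ, j % 2 = 0 →
      edg n f τ u j = s(Sum.inl ((f ^ (j / 2)) u), Sum.inr (τ ((f ^ (j / 2)) u))) := by
    intro j hj; simp [edg, hj]
  have hedg_odd : ∀ j : ℕ, j % 2 = 1 →
      edg n f τ u j = s(Sum.inl ((f ^ (j / 2 + 1)) u), Sum.inr (σ ((f ^ (j / 2 + 1)) u))) := by
    intro j hj
    have hσ : σ ((f ^ (j / 2 + 1)) u) = τ ((f ^ (j / 2)) u) := by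
      rw [pow_succ_apply']; exact key _
    unfold edg
    rw [if_neg (by omega : ¬ j % 2 = 0), ← hσ]
    exact Sym2.eq_swap
  refine ⟨Sum.inl u, (cyc n f τ ℓ u).copy rfl (congrArg Sum.inl hperp), ?_, ?_, ?_, ?_⟩
  all_goals {
    have hedges : ((cyc n f τ ℓ u).copy rfl (congrArg Sum.inl hperp)).edges
        = (List.range (2 * ℓ)).map (edg n f τ u) := by
      rw [Walk.edges_copy, cyc_edges]
    have hlen : ((cyc n f τ ℓ u).copy rfl (congrArg Sum.inl hperp)).length = 2 * ℓ := by
      rw [Walk.length_copy, cyc_length]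
    first
    | -- IsCycle
      (refine Walk.IsCycle.mk (Walk.IsCircuit.mk (Walk.IsTrail.mk ?_) ?_) ?_
       · -- edges nodup
         rw [hedges]
         refine (List.nodup_range (n := _)).map_on ?_
         intro j hj j' hj' h
         rw [List.mem_range] at hj hj'
         by_cases hj0 : j % 2 = 0 <;> by_cases hj'0 : j' % 2 = 0
         · rw [hedg_even j hj0, hedg_even j' hj'0] at h
           simp only [Sym2.eq_iff, Sum.inl.injEq, Sum.inr.injEq, and_false, false_and,
             or_false, reduceCtorEq] at h
           have := hltinj _ _ (by omega) (by omega) h.1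
           omega
         · rw [hedg_even j hj0, hedg_odd j' (by omega)] at h
           simp only [Sym2.eq_iff, Sum.inl.injEq, Sum.inr.injEq, and_false, false_and,
             or_false, reduceCtorEq] at h
           obtain ⟨h1, h2⟩ := h
           have h2' : (f ^ (j / 2)) u = (f ^ (j' / 2)) u := by
             have : σ ((f ^ (j' / 2 + 1)) u) = τ ((f ^ (j' / 2)) u) := by
               rw [pow_succ_apply']; exact key _
             rw [this] at h2
             exact τ.injective h2
           have hk : j / 2 = j' / 2 := hltinj _ _ (by omega) (by omega) h2'
           rw [hk] at h1
           -- (f ^ (j'/2)) u = (f ^ (j'/2 + 1)) u  : impossible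
           exfalso
           rcases Nat.lt_or_ge (j' / 2 + 1) ℓ with hlt | hge
           · have := hltinj _ _ (by omega) hlt h1; omega
           · have hje : j' / 2 + 1 = ℓ := by omega
             have h0 : (f ^ (j' / 2)) u = (f ^ (0 : ℕ)) u := by
               rw [h1, hje, hperp]; rfl
             have := hltinj _ _ (by omega) (by omega) h0
             omega
         · rw [hedg_odd j (by omega), hedg_even j' hj'0] at h
           simp only [Sym2.eq_iff, Sum.inl.injEq, Sum.inr.injEq, and_false, false_and,
             or_false, reduceCtorEq] at h
           obtain ⟨h1, h2⟩ := h
           have h2' : (f ^ (j / 2)) u = (f ^ (j' / 2)) u := by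
             have : σ ((f ^ (j / 2 + 1)) u) = τ ((f ^ (j / 2)) u) := by
               rw [pow_succ_apply']; exact key _
             rw [this] at h2
             exact τ.injective h2
           have hk : j / 2 = j' / 2 := hltinj _ _ (by omega) (by omega) h2'
           rw [← hk] at h1
           exfalso
           rcases Nat.lt_or_ge (j / 2 + 1) ℓ with hlt | hge
           · have := hltinj _ _ hlt (by omega) h1; omega
           · have hje : j / 2 + 1 = ℓ := by omega
             have h0 : (f ^ (j / 2)) u = (f ^ (0 : ℕ)) u := by
               rw [← h1, hje, hperp]; rfl
             have := hltinj _ _ (by omega) (by omega) h0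
             omega
         · rw [hedg_odd j (by omega), hedg_odd j' (by omega)] at h
           simp only [Sym2.eq_iff, Sum.inl.injEq, Sum.inr.injEq, and_false, false_and,
             or_false, reduceCtorEq] at h
           have := hUinj _ _ (by omega) (by omega) (by omega) (by omega) h.1
           omega
       · -- not nil
         intro hnil
         rw [hnil] at hlen
         simp at hlen
         omega
       · -- support tail nodup
         have hsup : ((cyc n f τ ℓ u).copy rfl (congrArg Sum.inl hperp)).support
             = Sum.inl u :: (List.range (2 * ℓ)).map (tl n f τ u) := by
           rw [Walk.support_copy, cyc_support]
         rw [hsup, List.tail_cons]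
         refine (List.nodup_range (n := _)).map_on ?_
         intro j hj j' hj' h
         rw [List.mem_range] at hj hj'
         unfold tl at h
         by_cases hj0 : j % 2 = 0 <;> by_cases hj'0 : j' % 2 = 0
         · rw [if_pos hj0, if_pos hj'0] at h
           have := hltinj _ _ (by omega) (by omega) (τ.injective (Sum.inr.inj h))
           omega
         · rw [if_pos hj0, if_neg hj'0] at h; exact absurd h (by simp)
         · rw [if_neg hj0, if_pos hj'0] at h; exact absurd h (by simp)
         · rw [if_neg hj0, if_neg hj'0] at h
           have := hUinj _ _ (by omega) (by omega) (by omega) (by omega) (Sum.inl.inj h)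
           omega)
    | -- length
      exact hlen
    | -- edge set
      (ext e
       simp only [Set.mem_setOf_eq, Set.mem_union, hedges]
       constructor
       · intro he
         obtain ⟨j, hjmem, rfl⟩ := List.mem_map.mp he
         rw [List.mem_range] at hjmem
         by_cases hj0 : j % 2 = 0
         · exact Or.inr ⟨(f ^ (j / 2)) u, by rw [hO]; exact ⟨j / 2, rfl⟩, hedg_even j hj0⟩
         · exact Or.inl ⟨(f ^ (j / 2 + 1)) u, by rw [hO]; exact ⟨j / 2 + 1, rfl⟩,
             hedg_odd j (by omega)⟩
       · intro he
         rcases he with ⟨m, hm, rfl⟩ | ⟨m, hm, rfl⟩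
         · -- σ edge
           rw [hO] at hm
           obtain ⟨k, rfl⟩ := hm
           have hklt : k % ℓ < ℓ := Nat.mod_lt _ hp
           by_cases h0 : k % ℓ = 0
           · -- use index 2*(ℓ-1)+1, s = ℓ
             refine List.mem_map.mpr ⟨2 * (ℓ - 1) + 1, List.mem_range.mpr (by omega), ?_⟩
             rw [hedg_odd _ (by omega)]
             have hidx : (2 * (ℓ - 1) + 1) / 2 + 1 = ℓ := by omega
             rw [hidx, hperp]
             have : (f ^ k) u = u := by rw [← hmodper k, h0]; rfl
             rw [this]
           · refine List.mem_map.mpr ⟨2 * (k % ℓ - 1) + 1, List.mem_range.mpr (by omega), ?_⟩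
             rw [hedg_odd _ (by omega)]
             have hidx : (2 * (k % ℓ - 1) + 1) / 2 + 1 = k % ℓ := by omega
             rw [hidx, hmodper]
         · -- τ edge
           rw [hO] at hm
           obtain ⟨k, rfl⟩ := hm
           have hklt : k % ℓ < ℓ := Nat.mod_lt _ hp
           refine List.mem_map.mpr ⟨2 * (k % ℓ), List.mem_range.mpr (by omega), ?_⟩
           rw [hedg_even _ (by omega)]
           have hidx : 2 * (k % ℓ) / 2 = k % ℓ := by omega
           rw [hidx, hmodper])
    | -- alternation
      (intro i h1 h2
       have hget : ∀ (i : ℕ) (h : i < ((cyc n f τ ℓ u).copy rfl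
           (congrArg Sum.inl hperp)).edges.length),
           ((cyc n f τ ℓ u).copy rfl (congrArg Sum.inl hperp)).edges.get ⟨i, h⟩
             = edg n f τ u i := by
         intro i h
         have h' : i < ((List.range (2 * ℓ)).map (edg n f τ u)).length := by
           rw [← hedges]; exact h
         rw [List.get_eq_getElem, List.getElem_of_eq hedges h, List.getElem_map,
           List.getElem_range]
       rw [hget i h1, hget (i + 1) h2]
       by_cases hi : i % 2 = 0
       · exact Or.inr ⟨⟨(f ^ (i / 2)) u, hedg_even i hi⟩,
           ⟨(f ^ ((i + 1) / 2 + 1)) u, hedg_odd (i + 1) (by omega)⟩⟩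
       · exact Or.inl ⟨⟨(f ^ (i / 2 + 1)) u, hedg_odd i (by omega)⟩,
           ⟨(f ^ ((i + 1) / 2)) u, hedg_even (i + 1) (by omega)⟩⟩)
  }
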